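/- Let d ≥ 2 be an integer, 0 ≤ α ≤ 1, ν ∈ ℝ^d with ν ≠ 0, and define N(α, ν) = {(ω₁, ω₂) ∈ ℝ^{2d} : ⟨ω₁ − ω₂, ν⟩ ≥ α |ω₁ − ω₂| |ν|}, where points of ℝ^{2d} are written as (ω₁, ω₂) with ω₁, ω₂ ∈ ℝ^d. Then the (2d−1)-dimensional Hausdorff measure of 𝕊₁^{2d-1} ∩ N(α, ν) is at most C arccos(α) for a constant C > 0 depending only on d. -/

import Mathlib

open MeasureTheory

/-- First component `ω₁` of a point of ℝ^{2d} = ℝ^d × ℝ^d. -/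
noncomputable def projL {d : ℕ} (p : EuclideanSpace ℝ (Fin d ⊕ Fin d)) :
    EuclideanSpace ℝ (Fin d) := WithLp.toLp 2 (fun i => p (Sum.inl i))

/-- Second component `ω₂` of a point of ℝ^{2d} = ℝ^d × ℝ^d. -/
noncomputable def projR {d : ℕ} (p : EuclideanSpace ℝ (Fin d ⊕ Fin d)) :
    EuclideanSpace ℝ (Fin d) := WithLp.toLp 2 (fun i => p (Sum.inr i))


lemma euclid_inner {n : Type*} [Fintype n] (x y : EuclideanSpace ℝ n) :
    (inner ℝ x y : ℝ) = ∑ a, x a * y a := by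
  rw [PiLp.inner_apply]; simp [RCLike.inner_apply]
  exact Finset.sum_congr rfl fun _ _ => mul_comm _ _

noncomputable def mixVec {d : ℕ} (g : Fin d → EuclideanSpace ℝ (Fin d)) :
    Fin d ⊕ Fin d → EuclideanSpace ℝ (Fin d ⊕ Fin d)
  | Sum.inl i => WithLp.toLp 2 fun t => (Real.sqrt 2)⁻¹ * Sum.elim (fun a => g i a) (fun a => -(g i a)) t
  | Sum.inr i => WithLp.toLp 2 fun t => (Real.sqrt 2)⁻¹ * Sum.elim (fun a => g i a) (fun a => g i a) t

lemma mix_orthonormal {d : ℕ} (g : OrthonormalBasis (Fin d) ℝ (EuclideanSpace ℝ (Fin d))) :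
    Orthonormal ℝ (mixVec g) := by
  have hg : ∀ i j, ∑ a, g i a * g j a = if i = j then (1:ℝ) else 0 := by
    intro i j
    rw [← euclid_inner]
    exact orthonormal_iff_ite.mp g.orthonormal i j
  have h2 : ((Real.sqrt 2)⁻¹ : ℝ) * (Real.sqrt 2)⁻¹ = 1/2 := by
    rw [← mul_inv, Real.mul_self_sqrt (by norm_num)]; norm_num
  rw [orthonormal_iff_ite]
  have key : ∀ (i j : Fin d) (ε δ : ℝ),
      ∑ a, ((Real.sqrt 2)⁻¹ * (ε * g i a)) * ((Real.sqrt 2)⁻¹ * (δ * g j a))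
        = (ε * δ / 2) * (if i = j then (1:ℝ) else 0) := by
    intro i j ε δ
    rw [← hg i j, Finset.mul_sum]
    apply Finset.sum_congr rfl
    intro a _
    linear_combination (ε * δ * g i a * g j a) * h2
  rintro (i|i) (j|j) <;>
    rw [euclid_inner, Fintype.sum_sum_type] <;>
    [skip; skip; skip; skip] <;>
    · have e1 := key i j 1 1
      have e2 := key i j (-1) (-1)
      have e3 := key i j (-1) 1
      have e4 := key i j 1 (-1)
      simp only [one_mul, neg_one_mul, neg_neg] at e1 e2 e3 e4
      simp only [mixVec, PiLp.toLp_apply, Sum.elim_inl, Sum.elim_inr]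
      first
      | (rw [e1, e2]; split_ifs <;> simp_all <;> norm_num)
      | (rw [e1, e3]; split_ifs <;> simp_all <;> norm_num)
      | (rw [e1, e4]; split_ifs <;> simp_all <;> norm_num)
      | (rw [e1]; split_ifs <;> simp_all <;> norm_num)

lemma sqrt_lip {a b c : ℝ} (hc : 0 < c) (ha : c ≤ a) (hb : c ≤ b) :
    |Real.sqrt a - Real.sqrt b| ≤ |a - b| / (2 * Real.sqrt c) := by
  have hsc : 0 < Real.sqrt c := Real.sqrt_pos.2 hc
  have ha0 : (0:ℝ) ≤ a := hc.le.trans ha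
  have hb0 : (0:ℝ) ≤ b := hc.le.trans hb
  have hsa : Real.sqrt c ≤ Real.sqrt a := Real.sqrt_le_sqrt ha
  have hsb : Real.sqrt c ≤ Real.sqrt b := Real.sqrt_le_sqrt hb
  rw [le_div_iff₀ (by positivity)]
  have key : a - b = (Real.sqrt a - Real.sqrt b) * (Real.sqrt a + Real.sqrt b) := by
    have := Real.sq_sqrt ha0; have := Real.sq_sqrt hb0; nlinarith
  rw [key, abs_mul]
  refine mul_le_mul_of_nonneg_left ?_ (abs_nonneg _)
  rw [abs_of_nonneg (by positivity)]; linarith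

section Band
variable {ι : Type*} [Fintype ι] [DecidableEq ι]

noncomputable def gmap (j : ι) (ε : ℝ) (y : {i : ι // i ≠ j} → ℝ) : EuclideanSpace ℝ ι :=
  WithLp.toLp 2 fun i => if h : i = j then ε * Real.sqrt (1 - ∑ i', (y i')^2) else y ⟨i, h⟩

lemma sum_subtype_ne (j : ι) (f : ι → ℝ) :
    ∑ i : {i : ι // i ≠ j}, f i = ∑ i ∈ {j}ᶜ, f i :=
  (Finset.sum_subtype _ (by simp) f).symm

lemma sum_split (j : ι) (f : ι → ℝ) :
    ∑ i : ι, f i = f j + ∑ i : {i : ι // i ≠ j}, f i := by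
  rw [sum_subtype_ne, ← Finset.sum_compl_add_sum {j} f, Finset.sum_singleton, add_comm]

lemma card_sub_le (j : ι) : (Fintype.card {i : ι // i ≠ j} : ℝ) ≤ (Fintype.card ι : ℝ) := by
  exact_mod_cast Fintype.card_subtype_le _

lemma gmap_apply_j (j : ι) (ε : ℝ) (y : {i : ι // i ≠ j} → ℝ) :
    gmap j ε y j = ε * Real.sqrt (1 - ∑ i', (y i')^2) := dif_pos rfl

lemma gmap_apply_ne (j : ι) (ε : ℝ) (y : {i : ι // i ≠ j} → ℝ) (i : {i : ι // i ≠ j}) :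
    gmap j ε y i = y i := dif_neg i.2

set_option maxHeartbeats 1000000 in
lemma gmap_lip (j : ι) (ε : ℝ) (hε : |ε| ≤ 1) :
    LipschitzOnWith (2 * (Fintype.card ι : NNReal)^2) (gmap j ε)
      {y | (∀ i, |y i| ≤ 1) ∧ ∑ i, (y i)^2 ≤ 1 - 1/(2 * (Fintype.card ι : ℝ))} := by
  have hm : 1 ≤ (Fintype.card ι : ℝ) := by
    have : 0 < Fintype.card ι := Fintype.card_pos_iff.2 ⟨j⟩
    exact_mod_cast this
  set m : ℝ := (Fintype.card ι : ℝ) with hmdef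
  have hm0 : 0 < m := by linarith
  apply LipschitzOnWith.of_dist_le_mul
  rintro y ⟨hy1, hy2⟩ y' ⟨hy'1, hy'2⟩
  set D := dist y y' with hD
  have hD0 : 0 ≤ D := dist_nonneg
  have hcoord : ∀ i, |y i - y' i| ≤ D := by
    intro i; rw [← Real.dist_eq]; exact dist_le_pi_dist y y' i
  have hK : ((2 * (Fintype.card ι : NNReal)^2 : NNReal) : ℝ) = 2 * m^2 := by
    push_cast; rfl
  rw [hK]
  set A := 1 - ∑ i, (y i)^2 with hA
  set A' := 1 - ∑ i, (y' i)^2 with hA'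
  have hcard : ((Finset.univ : Finset {i : ι // i ≠ j}).card : ℝ) ≤ m := by
    rw [Finset.card_univ]; exact card_sub_le j
  have hc0 : (0:ℝ) < 1/(2*m) := by positivity
  have hAc : 1/(2*m) ≤ A := by rw [hA]; linarith
  have hA'c : 1/(2*m) ≤ A' := by rw [hA']; linarith
  have hdiffA : |A - A'| ≤ 2 * m * D := by
    have : A - A' = ∑ i, ((y' i)^2 - (y i)^2) := by
      rw [hA, hA', Finset.sum_sub_distrib]; ring
    rw [this]
    calc |∑ i, ((y' i)^2 - (y i)^2)| ≤ ∑ i, |(y' i)^2 - (y i)^2| :=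
          Finset.abs_sum_le_sum_abs _ _
      _ ≤ ∑ _i : {i : ι // i ≠ j}, 2 * D := by
          apply Finset.sum_le_sum
          intro i _
          have : (y' i)^2 - (y i)^2 = (y' i - y i) * (y' i + y i) := by ring
          rw [this, abs_mul]
          have h1 : |y' i - y i| ≤ D := by rw [abs_sub_comm]; exact hcoord i
          have h2 : |y' i + y i| ≤ 2 := (abs_add_le _ _).trans (by
            have := hy'1 i; have := hy1 i; linarith)
          calc |y' i - y i| * |y' i + y i| ≤ D * 2 :=
                mul_le_mul h1 h2 (abs_nonneg _) hD0
            _ = 2 * D := by ring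
      _ = (Finset.univ.card : ℝ) * (2 * D) := by
          rw [Finset.sum_const, nsmul_eq_mul]
      _ ≤ m * (2 * D) := by
          apply mul_le_mul_of_nonneg_right hcard (by positivity)
      _ = 2 * m * D := by ring
  have hsq : |Real.sqrt A - Real.sqrt A'| ≤ |A - A'| / (2 * Real.sqrt (1/(2*m))) :=
    sqrt_lip hc0 hAc hA'c
  have hsqrtc : (2 * Real.sqrt (1/(2*m)))^2 = 2/m := by
    rw [mul_pow, Real.sq_sqrt hc0.le]; field_simp
  have hterm1 : (ε * Real.sqrt A - ε * Real.sqrt A')^2 ≤ 2 * m^3 * D^2 := by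
    have e1 : (ε * Real.sqrt A - ε * Real.sqrt A')^2
        = ε^2 * (Real.sqrt A - Real.sqrt A')^2 := by ring
    have hsq2 : (Real.sqrt A - Real.sqrt A')^2 ≤ (|A - A'| / (2 * Real.sqrt (1/(2*m))))^2 := by
      rw [← sq_abs]
      exact pow_le_pow_left₀ (abs_nonneg _) hsq 2
    have e2 : (|A - A'| / (2 * Real.sqrt (1/(2*m))))^2 = |A - A'|^2 * (m/2) := by
      rw [div_pow, hsqrtc]
      field_simp
    have h3 : |A - A'|^2 ≤ (2*m*D)^2 :=
      pow_le_pow_left₀ (abs_nonneg _) hdiffA 2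
    have hε2 : ε^2 ≤ 1 := by rw [← sq_abs]; nlinarith [abs_nonneg ε]
    have hnn : (0:ℝ) ≤ (Real.sqrt A - Real.sqrt A')^2 := sq_nonneg _
    calc (ε * Real.sqrt A - ε * Real.sqrt A')^2
        = ε^2 * (Real.sqrt A - Real.sqrt A')^2 := e1
      _ ≤ 1 * (Real.sqrt A - Real.sqrt A')^2 := mul_le_mul_of_nonneg_right hε2 hnn
      _ = (Real.sqrt A - Real.sqrt A')^2 := one_mul _
      _ ≤ (2*m*D)^2 * (m/2) := by
          calc (Real.sqrt A - Real.sqrt A')^2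
              ≤ (|A - A'| / (2 * Real.sqrt (1/(2*m))))^2 := hsq2
            _ = |A - A'|^2 * (m/2) := e2
            _ ≤ (2*m*D)^2 * (m/2) := mul_le_mul_of_nonneg_right h3 (by positivity)
      _ = 2 * m^3 * D^2 := by ring
  have hterm2 : ∑ i : {i : ι // i ≠ j}, (y i - y' i)^2 ≤ m * D^2 := by
    calc ∑ i : {i : ι // i ≠ j}, (y i - y' i)^2
        ≤ ∑ _i : {i : ι // i ≠ j}, D^2 := by
          apply Finset.sum_le_sum
          intro i _
          rw [← sq_abs]
          exact pow_le_pow_left₀ (abs_nonneg _) (hcoord i) 2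
      _ = (Finset.univ.card : ℝ) * D^2 := by rw [Finset.sum_const, nsmul_eq_mul]
      _ ≤ m * D^2 := mul_le_mul_of_nonneg_right hcard (sq_nonneg _)
  rw [EuclideanSpace.dist_eq]
  have hsum : ∑ i : ι, dist (gmap j ε y i) (gmap j ε y' i)^2 ≤ (2*m^2*D)^2 := by
    have hsplit := sum_split j (fun i => dist (gmap j ε y i) (gmap j ε y' i)^2)
    rw [hsplit]
    have hj : dist (gmap j ε y j) (gmap j ε y' j)^2 = (ε * Real.sqrt A - ε * Real.sqrt A')^2 := by
      rw [Real.dist_eq, sq_abs, gmap_apply_j, gmap_apply_j]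
    have hi : ∀ i : {i : ι // i ≠ j},
        dist (gmap j ε y i) (gmap j ε y' i)^2 = (y i - y' i)^2 := by
      intro i
      rw [Real.dist_eq, sq_abs, gmap_apply_ne, gmap_apply_ne]
    rw [hj]
    have : ∑ i : {i : ι // i ≠ j}, dist (gmap j ε y ↑i) (gmap j ε y' ↑i)^2
        = ∑ i : {i : ι // i ≠ j}, (y i - y' i)^2 := by
      apply Finset.sum_congr rfl; intro i _; exact hi i
    rw [this]
    have hmm : 2*m^3 + m ≤ 4*m^4 := by nlinarith [hm, sq_nonneg (m-1), sq_nonneg m]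
    have := mul_le_mul_of_nonneg_right hmm (sq_nonneg D)
    have hexp : (2*m^2*D)^2 = 4*m^4*D^2 := by ring
    rw [hexp]
    nlinarith [hterm1, hterm2]
  calc Real.sqrt (∑ i : ι, dist (gmap j ε y i) (gmap j ε y' i)^2)
      ≤ Real.sqrt ((2*m^2*D)^2) := Real.sqrt_le_sqrt hsum
    _ = 2*m^2*D := Real.sqrt_sq (by positivity)


lemma card_sub_eq (j : ι) : Fintype.card {i : ι // i ≠ j} = Fintype.card ι - 1 := by
  simp [Fintype.card_subtype_compl]

lemma piece_bound (j : ι) (ε : ℝ) (hε : |ε| ≤ 1) (r : {i : ι // i ≠ j} → ℝ)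
    (hr0 : ∀ i, 0 ≤ r i) (hr1 : ∀ i, r i ≤ 1) :
    μH[((Fintype.card ι - 1 : ℕ) : ℝ)]
      (gmap j ε '' ({y : {i : ι // i ≠ j} → ℝ |
            ∑ i, (y i)^2 ≤ 1 - 1/(2 * (Fintype.card ι : ℝ))}
          ∩ Set.univ.pi fun i => Set.Icc (-(r i)) (r i)))
      ≤ ENNReal.ofReal ((2*(Fintype.card ι : ℝ)^2)^(Fintype.card ι - 1) * ∏ i, (2 * r i)) := by
  have hsub : ({y : {i : ι // i ≠ j} → ℝ |
            ∑ i, (y i)^2 ≤ 1 - 1/(2 * (Fintype.card ι : ℝ))}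
          ∩ Set.univ.pi fun i => Set.Icc (-(r i)) (r i)) ⊆
      {y | (∀ i, |y i| ≤ 1) ∧ ∑ i, (y i)^2 ≤ 1 - 1/(2 * (Fintype.card ι : ℝ))} := by
    rintro y ⟨hy1, hy2⟩
    refine ⟨fun i => ?_, hy1⟩
    have := hy2 i (Set.mem_univ i)
    rw [Set.mem_Icc] at this
    rw [abs_le]
    exact ⟨by linarith [this.1, hr1 i], by linarith [this.2, hr1 i]⟩
  have hd0 : (0:ℝ) ≤ ((Fintype.card ι - 1 : ℕ) : ℝ) := Nat.cast_nonneg _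
  have h1 := ((gmap_lip j ε hε).mono hsub).hausdorffMeasure_image_le hd0
  refine h1.trans ?_
  have hμeq : (μH[((Fintype.card ι - 1 : ℕ) : ℝ)] :
      Measure ({i : ι // i ≠ j} → ℝ)) = volume := by
    rw [← card_sub_eq j]
    exact hausdorffMeasure_pi_real
  have hmono : (μH[((Fintype.card ι - 1 : ℕ) : ℝ)] :
        Measure ({i : ι // i ≠ j} → ℝ)) (({y : {i : ι // i ≠ j} → ℝ |
            ∑ i, (y i)^2 ≤ 1 - 1/(2 * (Fintype.card ι : ℝ))}
          ∩ Set.univ.pi fun i => Set.Icc (-(r i)) (r i)))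
      ≤ ENNReal.ofReal (∏ i, (2 * r i)) := by
    refine (measure_mono Set.inter_subset_right).trans ?_
    rw [hμeq, volume_pi_pi]
    rw [ENNReal.ofReal_prod_of_nonneg (fun i _ => by have := hr0 i; linarith)]
    refine le_of_eq (Finset.prod_congr rfl fun i _ => ?_)
    rw [Real.volume_Icc]
    congr 1; ring
  have hK : ((2 * (Fintype.card ι : NNReal)^2 : NNReal) : ENNReal) ^ ((Fintype.card ι - 1 : ℕ) : ℝ)
      = ENNReal.ofReal ((2*(Fintype.card ι : ℝ)^2)^(Fintype.card ι - 1)) := by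
    have hcoe : ((2 * (Fintype.card ι : NNReal)^2 : NNReal) : ENNReal)
        = ENNReal.ofReal (2*(Fintype.card ι : ℝ)^2) := by
      rw [← ENNReal.ofReal_coe_nnreal]
      congr 1
    rw [ENNReal.rpow_natCast, hcoe]
    exact (ENNReal.ofReal_pow (show (0:ℝ) ≤ 2*(Fintype.card ι : ℝ)^2 by positivity) _).symm
  calc (((2 * (Fintype.card ι : NNReal)^2 : NNReal)) : ENNReal) ^ ((Fintype.card ι - 1 : ℕ) : ℝ)
        * (μH[((Fintype.card ι - 1 : ℕ) : ℝ)] :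
      Measure ({i : ι // i ≠ j} → ℝ)) (({y : {i : ι // i ≠ j} → ℝ |
            ∑ i, (y i)^2 ≤ 1 - 1/(2 * (Fintype.card ι : ℝ))}
          ∩ Set.univ.pi fun i => Set.Icc (-(r i)) (r i)))
      ≤ ENNReal.ofReal ((2*(Fintype.card ι : ℝ)^2)^(Fintype.card ι - 1))
        * ENNReal.ofReal (∏ i, (2 * r i)) := by
        rw [hK]
        exact mul_le_mul_right hmono _
    _ = ENNReal.ofReal ((2*(Fintype.card ι : ℝ)^2)^(Fintype.card ι - 1) * ∏ i, (2 * r i)) := by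
        rw [← ENNReal.ofReal_mul (by positivity)]


lemma sum_sq_eq_one {x : EuclideanSpace ℝ ι} (hx : ‖x‖ = 1) : ∑ i, (x i)^2 = 1 := by
  have h := EuclideanSpace.norm_eq x
  rw [hx] at h
  have h2 : Real.sqrt (∑ i, ‖x i‖^2) = 1 := h.symm
  have hnn : (0:ℝ) ≤ ∑ i, ‖x i‖^2 := by positivity
  have h3 : ∑ i, ‖x i‖^2 = 1 := by nlinarith [Real.sq_sqrt hnn]
  simpa [Real.norm_eq_abs, sq_abs] using h3

lemma mem_pieces {x : EuclideanSpace ℝ ι} (hsum : ∑ i, (x i)^2 = 1) (j : ι)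
    (hj : 1/(2 * (Fintype.card ι : ℝ)) ≤ (x j)^2) (r : {i : ι // i ≠ j} → ℝ)
    (hr : ∀ i : {i : ι // i ≠ j}, |x i| ≤ r i) :
    x ∈ (gmap j 1 '' ({y : {i : ι // i ≠ j} → ℝ |
            ∑ i, (y i)^2 ≤ 1 - 1/(2 * (Fintype.card ι : ℝ))}
          ∩ Set.univ.pi fun i => Set.Icc (-(r i)) (r i)))
      ∪ (gmap j (-1) '' ({y : {i : ι // i ≠ j} → ℝ |
            ∑ i, (y i)^2 ≤ 1 - 1/(2 * (Fintype.card ι : ℝ))}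
          ∩ Set.univ.pi fun i => Set.Icc (-(r i)) (r i))) := by
  set y : {i : ι // i ≠ j} → ℝ := fun i => x i with hy
  have hysum : ∑ i, (y i)^2 = 1 - (x j)^2 := by
    have := sum_split j (fun i => (x i)^2)
    rw [hsum] at this
    simp only [hy]
    linarith
  have hydom : y ∈ {y : {i : ι // i ≠ j} → ℝ |
      ∑ i, (y i)^2 ≤ 1 - 1/(2 * (Fintype.card ι : ℝ))} := by
    rw [Set.mem_setOf_eq, hysum]
    linarith
  have hybox : y ∈ Set.univ.pi fun i => Set.Icc (-(r i)) (r i) := by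
    intro i _
    rw [Set.mem_Icc]
    exact abs_le.mp (hr i)
  have hsqrt : Real.sqrt (1 - ∑ i, (y i)^2) = |x j| := by
    rw [hysum]
    have : 1 - (1 - (x j)^2) = (x j)^2 := by ring
    rw [this, Real.sqrt_sq_eq_abs]
  rcases le_or_gt 0 (x j) with hxj | hxj
  · left
    refine ⟨y, ⟨hydom, hybox⟩, PiLp.ext fun i => ?_⟩
    by_cases hi : i = j
    · subst hi
      rw [gmap_apply_j, hsqrt, one_mul, abs_of_nonneg hxj]
    · exact gmap_apply_ne j 1 y ⟨i, hi⟩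
  · right
    refine ⟨y, ⟨hydom, hybox⟩, PiLp.ext fun i => ?_⟩
    by_cases hi : i = j
    · subst hi
      rw [gmap_apply_j, hsqrt, abs_of_neg hxj]
      ring
    · exact gmap_apply_ne j (-1) y ⟨i, hi⟩

lemma pair_bound (j : ι) (r : {i : ι // i ≠ j} → ℝ) (hr0 : ∀ i, 0 ≤ r i) (hr1 : ∀ i, r i ≤ 1)
    {θ : ℝ} (hθ0 : 0 ≤ θ) (hprod : ∏ i, (2 * r i) ≤ 2^(Fintype.card ι + 1) * θ) :
    μH[((Fintype.card ι - 1 : ℕ) : ℝ)]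
      ((gmap j 1 '' ({y : {i : ι // i ≠ j} → ℝ |
            ∑ i, (y i)^2 ≤ 1 - 1/(2 * (Fintype.card ι : ℝ))}
          ∩ Set.univ.pi fun i => Set.Icc (-(r i)) (r i)))
      ∪ (gmap j (-1) '' ({y : {i : ι // i ≠ j} → ℝ |
            ∑ i, (y i)^2 ≤ 1 - 1/(2 * (Fintype.card ι : ℝ))}
          ∩ Set.univ.pi fun i => Set.Icc (-(r i)) (r i))))
      ≤ ENNReal.ofReal (2 * ((2*(Fintype.card ι : ℝ)^2)^(Fintype.card ι - 1)
          * (2^(Fintype.card ι + 1) * θ))) := by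
  have hone : |(1:ℝ)| ≤ 1 := by norm_num
  have hmone : |(-1:ℝ)| ≤ 1 := by norm_num
  have h1 := piece_bound j 1 hone r hr0 hr1
  have h2 := piece_bound j (-1) hmone r hr0 hr1
  have hmul : ((2*(Fintype.card ι : ℝ)^2)^(Fintype.card ι - 1) * ∏ i, (2 * r i))
      ≤ (2*(Fintype.card ι : ℝ)^2)^(Fintype.card ι - 1) * (2^(Fintype.card ι + 1) * θ) := by
    apply mul_le_mul_of_nonneg_left hprod (by positivity)
  calc μH[((Fintype.card ι - 1 : ℕ) : ℝ)] _
      ≤ _ + _ := measure_union_le _ _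
    _ ≤ ENNReal.ofReal ((2*(Fintype.card ι : ℝ)^2)^(Fintype.card ι - 1) * ∏ i, (2 * r i))
        + ENNReal.ofReal ((2*(Fintype.card ι : ℝ)^2)^(Fintype.card ι - 1) * ∏ i, (2 * r i)) :=
        add_le_add h1 h2
    _ ≤ ENNReal.ofReal ((2*(Fintype.card ι : ℝ)^2)^(Fintype.card ι - 1)
          * (2^(Fintype.card ι + 1) * θ))
        + ENNReal.ofReal ((2*(Fintype.card ι : ℝ)^2)^(Fintype.card ι - 1)
          * (2^(Fintype.card ι + 1) * θ)) :=
        add_le_add (ENNReal.ofReal_le_ofReal hmul) (ENNReal.ofReal_le_ofReal hmul)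
    _ = ENNReal.ofReal (2 * ((2*(Fintype.card ι : ℝ)^2)^(Fintype.card ι - 1)
          * (2^(Fintype.card ι + 1) * θ))) := by
        rw [← ENNReal.ofReal_add (by positivity) (by positivity)]
        congr 1; ring


lemma band_bound (hcard : 2 ≤ Fintype.card ι) (k : ι) (θ : ℝ) (hθ0 : 0 ≤ θ) (hθ1 : θ ≤ 1) :
    μH[((Fintype.card ι - 1 : ℕ) : ℝ)] {x : EuclideanSpace ℝ ι | ‖x‖ = 1 ∧ |x k| ≤ θ}
      ≤ ENNReal.ofReal ((2*(Fintype.card ι : ℝ))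
          * (2 * ((2*(Fintype.card ι : ℝ)^2)^(Fintype.card ι - 1)
          * (2^(Fintype.card ι + 1) * θ)))) := by
  classical
  set m : ℕ := Fintype.card ι with hm
  have hm1 : 1 ≤ m := le_trans (by norm_num) hcard
  have hmR1 : (1:ℝ) ≤ (m : ℝ) := by exact_mod_cast hm1
  have hmR0 : (0:ℝ) < (m : ℝ) := by linarith
  set B : ENNReal := ENNReal.ofReal (2 * ((2*(m : ℝ)^2)^(m - 1) * (2^(m + 1) * θ))) with hB
  -- the域 sets
  set dom : ∀ j : ι, ({i : ι // i ≠ j} → ℝ) → Prop := fun j y =>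
    ∑ i, (y i)^2 ≤ 1 - 1/(2 * (m : ℝ)) with hdom
  by_cases hsmall : θ^2 ≤ 1/2
  · -- small θ : use graphs over j ≠ k with a thin box
    set r : ∀ j : ι, {i : ι // i ≠ j} → ℝ := fun j i => if (i:ι) = k then θ else 1 with hr
    have hr0 : ∀ j (i : {i : ι // i ≠ j}), 0 ≤ r j i := by
      intro j i; rw [hr]; dsimp only; split <;> norm_num; exact hθ0
    have hr1 : ∀ j (i : {i : ι // i ≠ j}), r j i ≤ 1 := by
      intro j i; rw [hr]; dsimp only; split <;> norm_num; exact hθ1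
    set U : ι → Set (EuclideanSpace ℝ ι) := fun j =>
      if j = k then ∅ else
      (gmap j 1 '' ({y : {i : ι // i ≠ j} → ℝ |
            ∑ i, (y i)^2 ≤ 1 - 1/(2 * (Fintype.card ι : ℝ))}
          ∩ Set.univ.pi fun i => Set.Icc (-(r j i)) (r j i)))
      ∪ (gmap j (-1) '' ({y : {i : ι // i ≠ j} → ℝ |
            ∑ i, (y i)^2 ≤ 1 - 1/(2 * (Fintype.card ι : ℝ))}
          ∩ Set.univ.pi fun i => Set.Icc (-(r j i)) (r j i))) with hU
    have hcover : {x : EuclideanSpace ℝ ι | ‖x‖ = 1 ∧ |x k| ≤ θ} ⊆ ⋃ j, U j := by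
      rintro x ⟨hx1, hx2⟩
      have hsum := sum_sq_eq_one hx1
      have habs1 : ∀ i : ι, |x i| ≤ 1 := by
        intro i
        have h1 : (x i)^2 ≤ 1 := by
          rw [← hsum]
          exact Finset.single_le_sum (fun i _ => sq_nonneg (x i)) (Finset.mem_univ i)
        nlinarith [abs_nonneg (x i), sq_abs (x i)]
      have hex : ∃ j, j ≠ k ∧ 1/(2 * (m:ℝ)) ≤ (x j)^2 := by
        by_contra hno
        push_neg at hno
        have hbound : ∑ i : {i : ι // i ≠ k}, (x i)^2 ≤ ((m - 1 : ℕ):ℝ) * (1/(2*(m:ℝ))) := by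
          calc ∑ i : {i : ι // i ≠ k}, (x i)^2
              ≤ (Finset.univ : Finset {i : ι // i ≠ k}).card • (1/(2*(m:ℝ))) := by
                apply Finset.sum_le_card_nsmul
                intro i _
                exact le_of_lt (hno i i.2)
            _ = ((m - 1 : ℕ):ℝ) * (1/(2*(m:ℝ))) := by
                rw [Finset.card_univ, card_sub_eq, nsmul_eq_mul, hm]
        have hcast : ((m - 1 : ℕ):ℝ) = (m:ℝ) - 1 := by
          rw [Nat.cast_sub hm1]; norm_num
        rw [hcast] at hbound
        have hsplitk := sum_split k (fun i => (x i)^2)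
        rw [hsum] at hsplitk
        have hxk : (x k)^2 ≤ θ^2 := by
          rw [← sq_abs (x k)]
          exact pow_le_pow_left₀ (abs_nonneg _) hx2 2
        have : ((m:ℝ) - 1) * (1/(2*(m:ℝ))) = 1/2 - 1/(2*(m:ℝ)) := by
          field_simp
        rw [this] at hbound
        have hpos : (0:ℝ) < 1/(2*(m:ℝ)) := by positivity
        linarith
      obtain ⟨j, hjk, hj⟩ := hex
      refine Set.mem_iUnion.2 ⟨j, ?_⟩
      rw [hU]
      dsimp only
      rw [if_neg hjk]
      apply mem_pieces hsum j hj (r j)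
      intro i
      rw [hr]; dsimp only
      by_cases hik : (i:ι) = k
      · rw [if_pos hik, hik]; exact hx2
      · rw [if_neg hik]; exact habs1 i
    refine (measure_mono hcover).trans ?_
    refine (measure_iUnion_fintype_le _ _).trans ?_
    have hUj : ∀ j, μH[((Fintype.card ι - 1 : ℕ) : ℝ)] (U j) ≤ B := by
      intro j
      rw [hU]; dsimp only
      by_cases hjk : j = k
      · rw [if_pos hjk]
        simp [hB]
      · rw [if_neg hjk]
        refine (pair_bound j (r j) (hr0 j) (hr1 j) hθ0 ?_).trans ?_
        · -- product bound
          have hk0 : (⟨k, Ne.symm hjk⟩ : {i : ι // i ≠ j}) ∈ (Finset.univ : Finset {i : ι // i ≠ j}) :=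
            Finset.mem_univ _
          rw [← Finset.mul_prod_erase _ _ hk0]
          have hfk : 2 * r j (⟨k, Ne.symm hjk⟩ : {i : ι // i ≠ j}) = 2 * θ := by
            rw [hr]; dsimp only; rw [if_pos rfl]
          rw [hfk]
          have hrest : ∏ i ∈ Finset.univ.erase (⟨k, Ne.symm hjk⟩ : {i : ι // i ≠ j}), (2 * r j i)
              ≤ 2^m := by
            calc ∏ i ∈ Finset.univ.erase (⟨k, Ne.symm hjk⟩ : {i : ι // i ≠ j}), (2 * r j i)
                ≤ ∏ _i ∈ Finset.univ.erase (⟨k, Ne.symm hjk⟩ : {i : ι // i ≠ j}), 2 := by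
                  apply Finset.prod_le_prod
                  · intro i _; have := hr0 j i; linarith
                  · intro i _; have := hr1 j i; linarith
              _ = 2^((Finset.univ.erase (⟨k, Ne.symm hjk⟩ : {i : ι // i ≠ j})).card) := by
                  rw [Finset.prod_const]
              _ ≤ 2^m := by
                  apply pow_le_pow_right₀ (by norm_num)
                  calc (Finset.univ.erase (⟨k, Ne.symm hjk⟩ : {i : ι // i ≠ j})).card
                      ≤ (Finset.univ : Finset {i : ι // i ≠ j}).card := Finset.card_erase_le
                    _ = m - 1 := by rw [Finset.card_univ, card_sub_eq, hm]
                    _ ≤ m := Nat.sub_le _ _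
          calc 2 * θ * ∏ i ∈ Finset.univ.erase (⟨k, Ne.symm hjk⟩ : {i : ι // i ≠ j}), (2 * r j i)
              ≤ 2 * θ * 2^m := by
                apply mul_le_mul_of_nonneg_left hrest (by positivity)
            _ = 2^(m+1) * θ := by rw [pow_succ]; ring
        · rw [hB, hm]
    refine (Finset.sum_le_card_nsmul Finset.univ _ B (fun j _ => hUj j)).trans ?_
    rw [Finset.card_univ, ← hm, nsmul_eq_mul, hB]
    rw [← ENNReal.ofReal_natCast m, ← ENNReal.ofReal_mul (by positivity)]
    apply ENNReal.ofReal_le_ofReal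
    have hP : (0:ℝ) ≤ (2*(m:ℝ)^2)^(m-1) * (2^(m+1)*θ) := by positivity
    nlinarith [mul_nonneg hmR0.le hP]
  · -- large θ : bound the whole sphere
    push_neg at hsmall
    have hθ4 : (1:ℝ) ≤ 4 * θ := by nlinarith
    set r : ∀ j : ι, {i : ι // i ≠ j} → ℝ := fun j i => 1 with hr
    have hr0 : ∀ j (i : {i : ι // i ≠ j}), 0 ≤ r j i := by intro j i; rw [hr]; norm_num
    have hr1 : ∀ j (i : {i : ι // i ≠ j}), r j i ≤ 1 := by intro j i; rw [hr]
    set U : ι → Set (EuclideanSpace ℝ ι) := fun j =>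
      (gmap j 1 '' ({y : {i : ι // i ≠ j} → ℝ |
            ∑ i, (y i)^2 ≤ 1 - 1/(2 * (Fintype.card ι : ℝ))}
          ∩ Set.univ.pi fun i => Set.Icc (-(r j i)) (r j i)))
      ∪ (gmap j (-1) '' ({y : {i : ι // i ≠ j} → ℝ |
            ∑ i, (y i)^2 ≤ 1 - 1/(2 * (Fintype.card ι : ℝ))}
          ∩ Set.univ.pi fun i => Set.Icc (-(r j i)) (r j i))) with hU
    have hcover : {x : EuclideanSpace ℝ ι | ‖x‖ = 1 ∧ |x k| ≤ θ} ⊆ ⋃ j, U j := by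
      rintro x ⟨hx1, _⟩
      have hsum := sum_sq_eq_one hx1
      have habs1 : ∀ i : ι, |x i| ≤ 1 := by
        intro i
        have h1 : (x i)^2 ≤ 1 := by
          rw [← hsum]
          exact Finset.single_le_sum (fun i _ => sq_nonneg (x i)) (Finset.mem_univ i)
        nlinarith [abs_nonneg (x i), sq_abs (x i)]
      have hex : ∃ j, 1/(2 * (m:ℝ)) ≤ (x j)^2 := by
        by_contra hno
        push_neg at hno
        have hbound : ∑ i : ι, (x i)^2 ≤ (m:ℝ) * (1/(2*(m:ℝ))) := by
          calc ∑ i : ι, (x i)^2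
              ≤ (Finset.univ : Finset ι).card • (1/(2*(m:ℝ))) := by
                apply Finset.sum_le_card_nsmul
                intro i _
                exact le_of_lt (hno i)
            _ = (m:ℝ) * (1/(2*(m:ℝ))) := by
                rw [Finset.card_univ, nsmul_eq_mul, hm]
        rw [hsum] at hbound
        have : (m:ℝ) * (1/(2*(m:ℝ))) = 1/2 := by field_simp
        rw [this] at hbound
        linarith
      obtain ⟨j, hj⟩ := hex
      refine Set.mem_iUnion.2 ⟨j, ?_⟩
      rw [hU]
      dsimp only
      apply mem_pieces hsum j hj (r j)
      intro i
      rw [hr]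
      exact habs1 i
    refine (measure_mono hcover).trans ?_
    refine (measure_iUnion_fintype_le _ _).trans ?_
    have hUj : ∀ j, μH[((Fintype.card ι - 1 : ℕ) : ℝ)] (U j) ≤ B := by
      intro j
      rw [hU]; dsimp only
      refine (pair_bound j (r j) (hr0 j) (hr1 j) hθ0 ?_).trans ?_
      · have : ∏ i : {i : ι // i ≠ j}, (2 * r j i) = 2^(Fintype.card {i : ι // i ≠ j}) := by
          rw [hr]
          simp [Finset.prod_const, Finset.card_univ]
        rw [this, card_sub_eq]
        calc (2:ℝ)^(m-1) = 2^(m-1) * 1 := by ring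
          _ ≤ 2^(m-1) * (4 * θ) := by
              apply mul_le_mul_of_nonneg_left hθ4 (by positivity)
          _ = (2^(m-1) * 4) * θ := by ring
          _ ≤ 2^(m+1) * θ := by
              apply mul_le_mul_of_nonneg_right _ hθ0
              calc (2:ℝ)^(m-1) * 4 = 2^(m-1) * 2^2 := by norm_num
                _ = 2^(m-1+2) := by rw [pow_add]
                _ ≤ 2^(m+1) := by
                    apply pow_le_pow_right₀ (by norm_num)
                    omega
      · rw [hB, hm]
    refine (Finset.sum_le_card_nsmul Finset.univ _ B (fun j _ => hUj j)).trans ?_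
    rw [Finset.card_univ, ← hm, nsmul_eq_mul, hB]
    rw [← ENNReal.ofReal_natCast m, ← ENNReal.ofReal_mul (by positivity)]
    apply ENNReal.ofReal_le_ofReal
    have hP : (0:ℝ) ≤ (2*(m:ℝ)^2)^(m-1) * (2^(m+1)*θ) := by positivity
    nlinarith [mul_nonneg hmR0.le hP]

end Band

set_option maxHeartbeats 1000000 in
theorem stmt_8 (d : ℕ) (hd : 2 ≤ d) :
    ∃ C > 0, ∀ α : ℝ, 0 ≤ α → α ≤ 1 →
      ∀ ν : EuclideanSpace ℝ (Fin d), ν ≠ 0 →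
        μH[2 * (d : ℝ) - 1] (Metric.sphere (0 : EuclideanSpace ℝ (Fin d ⊕ Fin d)) 1 ∩
              {p | α * ‖projL p - projR p‖ * ‖ν‖ ≤ (inner ℝ (projL p - projR p) ν : ℝ)})
            ≤ ENNReal.ofReal (C * Real.arccos α) := by
  classical
  set m : ℕ := Fintype.card (Fin d ⊕ Fin d) with hmdef
  have hcardm : m = d + d := by simp [hmdef]
  have hm2 : 2 ≤ m := by omega
  have hmR0 : (0:ℝ) < (m:ℝ) := by
    have : 0 < m := by omega
    exact_mod_cast this
  refine ⟨(2*(m : ℝ)) * (2 * ((2*(m : ℝ)^2)^(m - 1) * 2^(m + 1))), by positivity, ?_⟩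
  intro α hα0 hα1 ν hν
  set θ : ℝ := Real.sqrt (1 - α^2) with hθdef
  have hθ0 : 0 ≤ θ := Real.sqrt_nonneg _
  have hθ1 : θ ≤ 1 := Real.sqrt_le_one.mpr (by nlinarith)
  have hθarc : θ ≤ Real.arccos α := by
    rw [hθdef, ← Real.sin_arccos]
    exact Real.sin_le (Real.arccos_nonneg α)
  -- the adapted orthonormal basis of ℝ^d
  have hν0 : (0:ℝ) < ‖ν‖ := norm_pos_iff.2 hν
  set e : EuclideanSpace ℝ (Fin d) := ‖ν‖⁻¹ • ν with hedef
  have he : ‖e‖ = 1 := norm_smul_inv_norm hν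
  obtain ⟨g, hg0⟩ : ∃ g : OrthonormalBasis (Fin d) ℝ (EuclideanSpace ℝ (Fin d)),
      g ⟨0, by omega⟩ = e := by
    have hcard' : Module.finrank ℝ (EuclideanSpace ℝ (Fin d)) = Fintype.card (Fin d) :=
      finrank_euclideanSpace
    have horth : Orthonormal ℝ ((({⟨0, by omega⟩} : Set (Fin d))).restrict
        (fun _ : Fin d => e)) := by
      rw [orthonormal_iff_ite]
      intro i j
      have hij : i = j := Subtype.ext (by
        have hi := i.2; have hj := j.2
        simp only [Set.mem_singleton_iff] at hi hj
        rw [hi, hj])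
      rw [if_pos hij]
      have : (inner ℝ e e : ℝ) = 1 := by
        rw [real_inner_self_eq_norm_sq, he]; norm_num
      exact this
    obtain ⟨b, hb⟩ := horth.exists_orthonormalBasis_extension_of_card_eq hcard'
    exact ⟨b, hb _ (Set.mem_singleton _)⟩
  -- the adapted orthonormal basis of ℝ^{2d}
  obtain ⟨b2, hb2⟩ : ∃ b2 : OrthonormalBasis (Fin d ⊕ Fin d) ℝ
      (EuclideanSpace ℝ (Fin d ⊕ Fin d)), ∀ s, b2 s = mixVec g s := by
    have hcards : Module.finrank ℝ (EuclideanSpace ℝ (Fin d ⊕ Fin d))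
        = Fintype.card (Fin d ⊕ Fin d) := finrank_euclideanSpace
    have horth : Orthonormal ℝ ((Set.univ : Set (Fin d ⊕ Fin d)).restrict (mixVec g)) :=
      (mix_orthonormal g).comp _ Subtype.val_injective
    obtain ⟨b, hb⟩ := horth.exists_orthonormalBasis_extension_of_card_eq hcards
    exact ⟨b, fun s => hb s (Set.mem_univ s)⟩
  set S : Set (EuclideanSpace ℝ (Fin d ⊕ Fin d)) :=
    Metric.sphere (0 : EuclideanSpace ℝ (Fin d ⊕ Fin d)) 1 ∩
      {p | α * ‖projL p - projR p‖ * ‖ν‖ ≤ (inner ℝ (projL p - projR p) ν : ℝ)} with hSdef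
  set k : Fin d ⊕ Fin d := Sum.inl ⟨1, by omega⟩ with hkdef
  -- key pointwise estimate
  have hsub : (⇑b2.repr) '' S ⊆
      {x : EuclideanSpace ℝ (Fin d ⊕ Fin d) | ‖x‖ = 1 ∧ |x k| ≤ θ} := by
    rintro _ ⟨p, ⟨hp1, hp2⟩, rfl⟩
    have hpn : ‖p‖ = 1 := mem_sphere_zero_iff_norm.mp hp1
    constructor
    · rw [LinearIsometryEquiv.norm_map]; exact hpn
    · -- compute the coordinate
      set u : EuclideanSpace ℝ (Fin d) := projL p - projR p with hudef
      have hu : ∀ a, u a = p (Sum.inl a) - p (Sum.inr a) := fun a => rfl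
      have hTp : b2.repr p k = (Real.sqrt 2)⁻¹ * (inner ℝ (g ⟨1, by omega⟩) u : ℝ) := by
        rw [b2.repr_apply_apply, hb2, euclid_inner, Fintype.sum_sum_type, euclid_inner,
          Finset.mul_sum, ← Finset.sum_add_distrib]
        apply Finset.sum_congr rfl
        intro a _
        simp only [hkdef, mixVec, PiLp.toLp_apply, Sum.elim_inl, Sum.elim_inr]
        rw [hu a]
        ring
      -- Bessel-type estimate
      have hps : ∑ t, (p t)^2 = 1 := sum_sq_eq_one hpn
      have hu2 : ‖u‖^2 ≤ 2 := by
        have h1 : ‖u‖^2 = ∑ a, (u a)^2 := by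
          rw [EuclideanSpace.norm_eq, Real.sq_sqrt (by positivity)]
          exact Finset.sum_congr rfl fun a _ => by rw [Real.norm_eq_abs, sq_abs]
        rw [h1]
        have h2 : ∀ a : Fin d, (u a)^2 ≤ 2*(p (Sum.inl a))^2 + 2*(p (Sum.inr a))^2 := by
          intro a; rw [hu a]; nlinarith [sq_nonneg (p (Sum.inl a) + p (Sum.inr a))]
        calc ∑ a, (u a)^2 ≤ ∑ a, (2*(p (Sum.inl a))^2 + 2*(p (Sum.inr a))^2) :=
              Finset.sum_le_sum fun a _ => h2 a
          _ = 2 * ∑ t, (p t)^2 := by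
              rw [Fintype.sum_sum_type (fun t => (p t)^2), Finset.sum_add_distrib, mul_add,
                Finset.mul_sum, Finset.mul_sum]
          _ = 2 := by rw [hps]; ring
      have h01 : (⟨0, by omega⟩ : Fin d) ≠ ⟨1, by omega⟩ := by simp [Fin.ext_iff]
      have hbes := g.orthonormal.sum_inner_products_le (x := u)
        (s := ({⟨0, by omega⟩, ⟨1, by omega⟩} : Finset (Fin d)))
      rw [Finset.sum_pair h01] at hbes
      have hJ0 : α * ‖u‖ ≤ (inner ℝ (g ⟨0, by omega⟩) u : ℝ) := by
        rw [hg0, hedef, real_inner_smul_left]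
        have h3 : (inner ℝ ν u : ℝ) = (inner ℝ u ν : ℝ) := real_inner_comm u ν
        rw [h3]
        rw [Set.mem_setOf_eq] at hp2
        have h5 := mul_le_mul_of_nonneg_left hp2 (inv_nonneg.2 hν0.le)
        have h6 : ‖ν‖⁻¹ * (α * ‖u‖ * ‖ν‖) = α * ‖u‖ := by field_simp
        linarith
      have hJ0sq : (α * ‖u‖)^2 ≤ (inner ℝ (g ⟨0, by omega⟩) u : ℝ)^2 := by
        have h5 : 0 ≤ α * ‖u‖ := by positivity
        nlinarith [hJ0]
      have hnorms : ∀ i : Fin d, ‖(inner ℝ (g i) u : ℝ)‖^2 = (inner ℝ (g i) u : ℝ)^2 := by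
        intro i; rw [Real.norm_eq_abs, sq_abs]
      rw [hnorms, hnorms] at hbes
      have hJ1 : (inner ℝ (g ⟨1, by omega⟩) u : ℝ)^2 ≤ 2 * (1 - α^2) := by
        have h6 : (α * ‖u‖)^2 = α^2 * ‖u‖^2 := by ring
        have h7 : (inner ℝ (g ⟨1, by omega⟩) u : ℝ)^2 ≤ (1 - α^2) * ‖u‖^2 := by
          nlinarith [hbes, hJ0sq]
        have h8 : (1 - α^2) * ‖u‖^2 ≤ (1-α^2) * 2 := by
          apply mul_le_mul_of_nonneg_left hu2 (by nlinarith)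
        linarith
      rw [hTp]
      rw [abs_mul]
      have h9 : |(Real.sqrt 2)⁻¹| = (Real.sqrt 2)⁻¹ := abs_of_nonneg (by positivity)
      rw [h9]
      have h10 : |(inner ℝ (g ⟨1, by omega⟩) u : ℝ)| ≤ Real.sqrt (2 * (1 - α^2)) :=
        Real.abs_le_sqrt hJ1
      have h11 : Real.sqrt (2 * (1 - α^2)) = Real.sqrt 2 * θ := by
        rw [hθdef, ← Real.sqrt_mul (by norm_num)]
      calc (Real.sqrt 2)⁻¹ * |(inner ℝ (g ⟨1, by omega⟩) u : ℝ)|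
          ≤ (Real.sqrt 2)⁻¹ * (Real.sqrt 2 * θ) := by
            apply mul_le_mul_of_nonneg_left _ (by positivity)
            rw [← h11]; exact h10
        _ = θ := by
            rw [← mul_assoc, inv_mul_cancel₀ (by positivity), one_mul]
  -- transport the measure and conclude
  have hexp : 2 * (d : ℝ) - 1 = ((m - 1 : ℕ) : ℝ) := by
    rw [Nat.cast_sub (by omega), hcardm]
    push_cast
    ring
  rw [hexp]
  have hiso : μH[((m - 1 : ℕ) : ℝ)] S
      = μH[((m - 1 : ℕ) : ℝ)] ((⇑b2.repr) '' S) :=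
    (b2.repr.isometry.hausdorffMeasure_image (Or.inr b2.repr.surjective) S).symm
  rw [hiso]
  calc μH[((m - 1 : ℕ) : ℝ)] ((⇑b2.repr) '' S)
      ≤ μH[((m - 1 : ℕ) : ℝ)]
          {x : EuclideanSpace ℝ (Fin d ⊕ Fin d) | ‖x‖ = 1 ∧ |x k| ≤ θ} :=
        measure_mono hsub
    _ ≤ ENNReal.ofReal ((2*(Fintype.card (Fin d ⊕ Fin d) : ℝ))
          * (2 * ((2*(Fintype.card (Fin d ⊕ Fin d) : ℝ)^2)^(Fintype.card (Fin d ⊕ Fin d) - 1)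
          * (2^(Fintype.card (Fin d ⊕ Fin d) + 1) * θ)))) :=
        band_bound hm2 k θ hθ0 hθ1
    _ ≤ ENNReal.ofReal ((2*(m : ℝ)) * (2 * ((2*(m : ℝ)^2)^(m - 1) * 2^(m + 1)))
          * Real.arccos α) := by
        apply ENNReal.ofReal_le_ofReal
        rw [← hmdef]
        have hCpos : (0:ℝ) ≤ (2*(m : ℝ)) * (2 * ((2*(m : ℝ)^2)^(m - 1) * 2^(m + 1))) := by
          positivity
        calc (2*(m:ℝ)) * (2 * ((2*(m:ℝ)^2)^(m - 1) * (2^(m + 1) * θ)))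
            = (2*(m : ℝ)) * (2 * ((2*(m : ℝ)^2)^(m - 1) * 2^(m + 1))) * θ := by ring
          _ ≤ (2*(m : ℝ)) * (2 * ((2*(m : ℝ)^2)^(m - 1) * 2^(m + 1))) * Real.arccos α :=
            mul_le_mul_of_nonneg_left hθarc hCpos
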